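/- Let $T_r$ be the sum of $r$ independent exponential random variables of rate $1$ (i.e., Gamma$(r,1)$-distributed), and define $p_r = \mathbb{E}[1/(1+T_r)]$. Then $r\,p_r \to 1$ as $r \to \infty$. -/

import Mathlib

open MeasureTheory ProbabilityTheory Set Filter Topology
open scoped ENNReal NNReal

lemma myint_gamma {a : ℝ} (ha : 2 ≤ a) :
    ∫ x, (1 + x)⁻¹ ∂(gammaMeasure a 1)
      = (Real.Gamma a)⁻¹ * ∫ x in Ioi (0:ℝ), Real.exp (-x) * x ^ (a-1) / (1+x) := by
  rw [gammaMeasure]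
  have hd : (gammaPDF a 1) = fun x => ((fun x => (gammaPDFReal a 1 x).toNNReal) x : ℝ≥0∞) := by
    funext x; simp [gammaPDF, ENNReal.ofReal]
  rw [hd, integral_withDensity_eq_integral_smul
    ((measurable_gammaPDFReal a 1).real_toNNReal) (fun x => (1+x)⁻¹)]
  have h1 : ∀ x : ℝ, ((gammaPDFReal a 1 x).toNNReal : ℝ≥0) • (1+x)⁻¹
      = gammaPDFReal a 1 x * (1+x)⁻¹ := by
    intro x
    rw [NNReal.smul_def, Real.coe_toNNReal _ (gammaPDFReal_nonneg (by linarith) one_pos x), smul_eq_mul]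
  simp_rw [h1]
  rw [← setIntegral_eq_integral_of_forall_compl_eq_zero (s := Ioi (0:ℝ))]
  · rw [← integral_const_mul]
    apply setIntegral_congr_fun measurableSet_Ioi
    intro x hx
    simp only [gammaPDFReal, if_pos (le_of_lt (mem_Ioi.mp hx)), Real.one_rpow, one_mul, neg_mul]
    field_simp
  · intro x hx
    simp only [mem_Ioi, not_lt] at hx
    rcases lt_or_eq_of_le hx with h | h
    · simp [gammaPDFReal, not_le.mpr h]
    · subst h
      simp [gammaPDFReal, Real.zero_rpow (by intro h0; rw [sub_eq_zero] at h0; linarith : a - 1 ≠ 0)]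

lemma mybounds {a : ℝ} (ha : 3 ≤ a) :
    Real.Gamma (a-1) - Real.Gamma (a-2)
      ≤ (∫ x in Ioi (0:ℝ), Real.exp (-x) * x ^ (a-1) / (1+x)) ∧
    (∫ x in Ioi (0:ℝ), Real.exp (-x) * x ^ (a-1) / (1+x)) ≤ Real.Gamma (a-1) := by
  have hg1 : IntegrableOn (fun x : ℝ => Real.exp (-x) * x ^ ((a-1) - 1)) (Ioi 0) :=
    Real.GammaIntegral_convergent (by linarith)
  have hg2 : IntegrableOn (fun x : ℝ => Real.exp (-x) * x ^ ((a-2) - 1)) (Ioi 0) :=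
    Real.GammaIntegral_convergent (by linarith)
  -- pointwise facts
  have key : ∀ x ∈ Ioi (0:ℝ),
      Real.exp (-x) * x ^ ((a-1)-1) - Real.exp (-x) * x ^ ((a-2)-1)
        ≤ Real.exp (-x) * x ^ (a-1) / (1+x) ∧
      Real.exp (-x) * x ^ (a-1) / (1+x) ≤ Real.exp (-x) * x ^ ((a-1)-1) := by
    intro x hx
    have hx0 : 0 < x := hx
    have h1x : 0 < 1 + x := by linarith
    have e1 : x ^ ((a-1)-1) * x = x ^ (a-1) := by
      rw [← Real.rpow_add_one hx0.ne']; ring_nf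
    have e2 : x ^ ((a-2)-1) * x = x ^ ((a-1)-1) := by
      rw [← Real.rpow_add_one hx0.ne']; ring_nf
    have p1 : (0:ℝ) < x ^ (a-1) := Real.rpow_pos_of_pos hx0 _
    have p2 : (0:ℝ) < x ^ ((a-1)-1) := Real.rpow_pos_of_pos hx0 _
    have p3 : (0:ℝ) < x ^ ((a-2)-1) := Real.rpow_pos_of_pos hx0 _
    have hexp : (0:ℝ) < Real.exp (-x) := Real.exp_pos _
    constructor
    · rw [le_div_iff₀ h1x]
      nlinarith
    · rw [div_le_iff₀ h1x]
      nlinarith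
  -- integrability of the middle function
  have hmid : IntegrableOn (fun x : ℝ => Real.exp (-x) * x ^ (a-1) / (1+x)) (Ioi 0) := by
    apply Integrable.mono hg1
    · apply Measurable.aestronglyMeasurable
      fun_prop
    · rw [ae_restrict_iff' measurableSet_Ioi]
      filter_upwards with x hx
      have hx0 : 0 < x := hx
      have h1 := (key x hx).2
      have h0 : 0 ≤ Real.exp (-x) * x ^ (a-1) / (1+x) := by positivity
      rw [Real.norm_eq_abs, Real.norm_eq_abs, abs_of_nonneg h0, abs_of_nonneg (by positivity)]
      exact h1
  constructor
  · have : Real.Gamma (a-1) - Real.Gamma (a-2)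
        = ∫ x in Ioi (0:ℝ), (Real.exp (-x) * x ^ ((a-1)-1) - Real.exp (-x) * x ^ ((a-2)-1)) := by
      rw [integral_sub hg1 hg2, ← Real.Gamma_eq_integral (by linarith : (0:ℝ) < a - 1),
        ← Real.Gamma_eq_integral (by linarith : (0:ℝ) < a - 2)]
    rw [this]
    exact setIntegral_mono_on (hg1.sub hg2) hmid measurableSet_Ioi (fun x hx => (key x hx).1)
  · rw [Real.Gamma_eq_integral (by linarith : (0:ℝ) < a - 1)]
    exact setIntegral_mono_on hmid hg1 measurableSet_Ioi (fun x hx => (key x hx).2)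

theorem stmt8
    {Ω : Type*} [MeasurableSpace Ω] (μ : Measure Ω) [IsProbabilityMeasure μ]
    (T : ℕ → Ω → ℝ) (hmeas : ∀ r, Measurable (T r))
    (hdist : ∀ r ≥ 1, μ.map (T r) = gammaMeasure r 1)
    (p : ℕ → ℝ) (hp : ∀ r, p r = μ[fun ω => (1 + T r ω)⁻¹]) :
    Tendsto (fun r : ℕ => (r : ℝ) * p r) atTop (𝓝 1) := by
  -- bounds on r * p r for r ≥ 3
  have hbound : ∀ r : ℕ, 3 ≤ r →
      (r:ℝ)/((r:ℝ)-1) - (r:ℝ)/((r:ℝ)-1) * ((r:ℝ)-2)⁻¹ ≤ (r:ℝ) * p r ∧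
      (r:ℝ) * p r ≤ (r:ℝ)/((r:ℝ)-1) := by
    intro r hr
    set a : ℝ := (r : ℝ) with ha_def
    have ha : 3 ≤ a := by rw [ha_def]; exact_mod_cast hr
    have hp_eq : p r = (Real.Gamma a)⁻¹ * ∫ x in Ioi (0:ℝ),
        Real.exp (-x) * x ^ (a-1) / (1+x) := by
      rw [hp r]
      have h1 : μ[fun ω => (1 + T r ω)⁻¹] = ∫ x, (1+x)⁻¹ ∂(μ.map (T r)) := by
        rw [integral_map (hmeas r).aemeasurable]
        exact (Measurable.aestronglyMeasurable (by fun_prop))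
      rw [h1, hdist r (by omega), myint_gamma (by linarith)]
    obtain ⟨hlo, hhi⟩ := mybounds ha
    have hG1 : 0 < Real.Gamma (a-1) := Real.Gamma_pos_of_pos (by linarith)
    have hG2 : 0 < Real.Gamma (a-2) := Real.Gamma_pos_of_pos (by linarith)
    have hGa1 : Real.Gamma a = (a-1) * Real.Gamma (a-1) := by
      have h := Real.Gamma_add_one (ne_of_gt (by linarith : (0:ℝ) < a-1))
      rw [show a - 1 + 1 = a by ring] at h
      exact h
    have hGa2 : Real.Gamma (a-1) = (a-2) * Real.Gamma (a-2) := by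
      have h := Real.Gamma_add_one (ne_of_gt (by linarith : (0:ℝ) < a-2))
      rw [show a - 2 + 1 = a - 1 by ring] at h
      exact h
    have hGa : 0 < Real.Gamma a := Real.Gamma_pos_of_pos (by linarith)
    have ha1 : (0:ℝ) < a - 1 := by linarith
    have ha2 : (0:ℝ) < a - 2 := by linarith
    have hr0 : (0:ℝ) ≤ a := by linarith
    constructor
    · rw [hp_eq]
      have h : (r:ℝ)/((r:ℝ)-1) - (r:ℝ)/((r:ℝ)-1) * ((r:ℝ)-2)⁻¹
          = a * (Real.Gamma a)⁻¹ * (Real.Gamma (a-1) - Real.Gamma (a-2)) := by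
        rw [← ha_def, hGa1, hGa2]
        field_simp
      rw [h]
      have := mul_le_mul_of_nonneg_left hlo (by positivity : (0:ℝ) ≤ a * (Real.Gamma a)⁻¹)
      linarith [this]
    · rw [hp_eq]
      have h : (r:ℝ)/((r:ℝ)-1) = a * (Real.Gamma a)⁻¹ * Real.Gamma (a-1) := by
        rw [← ha_def, hGa1]; field_simp
      rw [h]
      have := mul_le_mul_of_nonneg_left hhi (by positivity : (0:ℝ) ≤ a * (Real.Gamma a)⁻¹)
      linarith [this]
  -- limits of the bound functions
  have hU : Tendsto (fun r : ℕ => (r:ℝ)/((r:ℝ)-1)) atTop (𝓝 1) := by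
    have h1 : Tendsto (fun r : ℕ => ((r:ℝ)-1)⁻¹) atTop (𝓝 0) := by
      apply Tendsto.inv_tendsto_atTop
      exact tendsto_atTop_add_const_right _ _ tendsto_natCast_atTop_atTop
    have : Tendsto (fun r : ℕ => 1 + ((r:ℝ)-1)⁻¹) atTop (𝓝 (1 + 0)) :=
      tendsto_const_nhds.add h1
    rw [add_zero] at this
    apply this.congr'
    filter_upwards [eventually_ge_atTop 2] with r hr
    have : ((r:ℝ)-1) ≠ 0 := by
      have : (2:ℝ) ≤ (r:ℝ) := by exact_mod_cast hr
      linarith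
    field_simp
    ring
  have hL : Tendsto (fun r : ℕ => (r:ℝ)/((r:ℝ)-1) - (r:ℝ)/((r:ℝ)-1) * ((r:ℝ)-2)⁻¹)
      atTop (𝓝 1) := by
    have h2 : Tendsto (fun r : ℕ => ((r:ℝ)-2)⁻¹) atTop (𝓝 0) := by
      apply Tendsto.inv_tendsto_atTop
      exact tendsto_atTop_add_const_right _ _ tendsto_natCast_atTop_atTop
    have := hU.sub (hU.mul h2)
    simpa using this
  refine tendsto_of_tendsto_of_tendsto_of_le_of_le' hL hU ?_ ?_
  · filter_upwards [eventually_ge_atTop 3] with r hr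
    exact (hbound r hr).1
  · filter_upwards [eventually_ge_atTop 3] with r hr
    exact (hbound r hr).2
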